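/- Let G be a finite connected split graph and let D_s and D_t be two distance-2 dominating sets of G with |D_s| = |D_t|. Then there exists a TS-sequence in G from D_s to D_t. -/
import Mathlib


/-- `D` is a distance-`r` dominating set of `G`. -/
def IsDrDS {V : Type*} (G : SimpleGraph V) (r : ℕ) (D : Set V) : Prop :=
  ∀ v : V, ∃ u ∈ D, G.Reachable u v ∧ G.dist u v ≤ r

/-- A TS-sequence of length `q` of distance-`r` dominating sets of `G`:
each step slides a token along an edge. -/
def IsTSSeq {V : Type*} (G : SimpleGraph V) (r q : ℕ)
    (Dseq : Fin (q + 1) → Finset V) : Prop :=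
  (∀ i, IsDrDS G r ↑(Dseq i)) ∧
  ∀ i : Fin q, ∃ x ∈ Dseq i.castSucc, ∃ y, y ∉ Dseq i.castSucc ∧ G.Adj x y ∧
    (↑(Dseq i.succ) : Set V) = (↑(Dseq i.castSucc) \ {x}) ∪ {y}

namespace TSAux
variable {V : Type*} [DecidableEq V]

/-- Move a token from `x` to `y`. -/
def mv (D : Finset V) (x y : V) : Finset V := insert y (D.erase x)

lemma mem_mv {D : Finset V} {x y z : V} : z ∈ mv D x y ↔ z = y ∨ (z ∈ D ∧ z ≠ x) := by
  simp [mv, Finset.mem_insert, Finset.mem_erase, and_comm]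

lemma coe_mv {D : Finset V} {x y : V} (hx : x ∈ D) (hy : y ∉ D) :
    (↑(mv D x y) : Set V) = (↑D \ {x}) ∪ {y} := by
  ext z
  simp only [Finset.coe_insert, mv, Set.mem_insert_iff, Finset.coe_erase, Set.mem_diff,
    Set.mem_singleton_iff, Set.mem_union, Finset.mem_coe]
  tauto

lemma card_mv {D : Finset V} {x y : V} (hx : x ∈ D) (hy : y ∉ D) :
    (mv D x y).card = D.card := by
  have : y ∉ D.erase x := fun h => hy (Finset.mem_of_mem_erase h)
  rw [mv, Finset.card_insert_of_notMem this, Finset.card_erase_of_mem hx]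
  have := Finset.card_pos.mpr ⟨x, hx⟩
  omega

lemma mv_mv_cancel {D : Finset V} {a b c : V} (hb : b ∉ D) :
    mv (mv D a b) b c = mv D a c := by
  unfold mv
  rw [Finset.erase_insert]
  exact fun h => hb (Finset.mem_of_mem_erase h)

lemma mv_mv_thread {D : Finset V} {a b c : V} (hca : c ≠ a) (hcb : c ≠ b) (ha : a ∈ D) :
    mv (mv D a b) c a = mv D c b := by
  unfold mv
  rw [Finset.erase_insert_of_ne hcb.symm, Finset.insert_comm, Finset.erase_right_comm,
    Finset.insert_erase (Finset.mem_erase.mpr ⟨hca.symm, ha⟩)]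

lemma sdiff_mv_lt {D D' : Finset V} {x y : V} (hx : x ∈ D \ D') (hy : y ∈ D' \ D) :
    ((mv D x y) \ D').card < (D \ D').card := by
  simp only [Finset.mem_sdiff] at hx hy
  have : (mv D x y) \ D' = (D \ D').erase x := by
    ext z
    simp only [Finset.mem_sdiff, mem_mv, Finset.mem_erase]
    constructor
    · rintro ⟨h1 | ⟨h1, h2⟩, h3⟩
      · exact absurd hy.1 (h1 ▸ h3)
      · exact ⟨h2, h1, h3⟩
    · rintro ⟨h1, h2, h3⟩; exact ⟨Or.inr ⟨h2, h1⟩, h3⟩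
  rw [this]
  exact Finset.card_erase_lt_of_mem (Finset.mem_sdiff.mpr hx)

variable (G : SimpleGraph V)

/-- One token-slide step between dominating sets. -/
def R (A B : Finset V) : Prop :=
  IsDrDS G 2 ↑A ∧ IsDrDS G 2 ↑B ∧
    ∃ x ∈ A, ∃ y, y ∉ A ∧ G.Adj x y ∧ (↑B : Set V) = (↑A \ {x}) ∪ {y}

lemma R.symm {A B : Finset V} (h : R G A B) : R G B A := by
  obtain ⟨hA, hB, x, hx, y, hy, hadj, heq⟩ := h
  have hxy : x ≠ y := fun h => hy (h ▸ hx)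
  have hmem : ∀ z, z ∈ B ↔ z = y ∨ (z ∈ A ∧ ¬ z = x) := by
    intro z
    have := Set.ext_iff.mp heq z
    simpa using this
  have hyB : y ∈ B := (hmem y).mpr (Or.inl rfl)
  have hxB : x ∉ B := by
    rw [hmem]; rintro (h | ⟨_, h⟩) <;> [exact hxy h; exact h rfl]
  refine ⟨hB, hA, y, hyB, x, hxB, hadj.symm, ?_⟩
  ext z
  have hz := hmem z
  simp only [Set.mem_union, Set.mem_diff, Set.mem_singleton_iff, Finset.mem_coe, hz]
  by_cases h1 : z = x <;> by_cases h2 : z = y <;> simp_all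

lemma RTG_symm {A B : Finset V} (h : Relation.ReflTransGen (R G) A B) :
    Relation.ReflTransGen (R G) B A := by
  induction h with
  | refl => exact .refl
  | tail _ h ih => exact .trans (.single h.symm) ih

lemma R.step {D : Finset V} {x y : V} (hx : x ∈ D) (hy : y ∉ D) (hadj : G.Adj x y)
    (hA : IsDrDS G 2 ↑D) (hB : IsDrDS G 2 ↑(mv D x y)) : R G D (mv D x y) :=
  ⟨hA, hB, x, hx, y, hy, hadj, coe_mv hx hy⟩

lemma RTG_toSeq {A B : Finset V} (h : Relation.ReflTransGen (R G) A B)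
    (hA : IsDrDS G 2 ↑A) :
    ∃ (q : ℕ) (f : Fin (q + 1) → Finset V),
      IsTSSeq G 2 q f ∧ f 0 = A ∧ f (Fin.last q) = B := by
  induction h with
  | refl => exact ⟨0, fun _ => A, ⟨fun _ => hA, fun i => i.elim0⟩, rfl, rfl⟩
  | @tail B C hAB hBC ih =>
    obtain ⟨q, f, ⟨hdom, hstep⟩, h0, hlast⟩ := ih
    refine ⟨q + 1, Fin.snoc f C, ⟨?_, ?_⟩, ?_, ?_⟩
    · intro i
      refine Fin.lastCases ?_ (fun j => ?_) i
      · rw [Fin.snoc_last]; exact hBC.2.1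
      · rw [Fin.snoc_castSucc]; exact hdom j
    · intro i
      refine Fin.lastCases ?_ (fun j => ?_) i
      · obtain ⟨_, _, x, hx, y, hy, hadj, heq⟩ := hBC
        refine ⟨x, ?_, y, ?_, hadj, ?_⟩
        · rw [Fin.snoc_castSucc, hlast]; exact hx
        · rw [Fin.snoc_castSucc, hlast]; exact hy
        · rw [Fin.succ_last, Fin.snoc_last, Fin.snoc_castSucc, hlast]
          exact heq
      · obtain ⟨x, hx, y, hy, hadj, heq⟩ := hstep j
        refine ⟨x, ?_, y, ?_, hadj, ?_⟩
        · rw [Fin.snoc_castSucc]; exact hx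
        · rw [Fin.snoc_castSucc]; exact hy
        · rw [Fin.succ_castSucc, Fin.snoc_castSucc, Fin.snoc_castSucc]
          exact heq
    · have h00 : (0 : Fin (q+2)) = (0 : Fin (q+1)).castSucc := by simp
      rw [h00, Fin.snoc_castSucc]; exact h0
    · rw [Fin.snoc_last]


variable {K S : Set V}

variable {V : Type*} {G : SimpleGraph V} {K S : Set V}

lemma exists_adj (hconn : G.Connected) (hnt : Nontrivial V) (v : V) :
    ∃ w, G.Adj v w := by
  obtain ⟨u, hu⟩ := exists_ne v
  obtain ⟨p⟩ := hconn.preconnected v u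
  cases p with
  | nil => exact absurd rfl hu.symm
  | cons h _ => exact ⟨_, h⟩

lemma neighbor_in_K (hpart : K ∪ S = Set.univ) (hS : ∀ a ∈ S, ∀ b ∈ S, ¬ G.Adj a b)
    (hconn : G.Connected) (hnt : Nontrivial V) {v : V} (hv : v ∈ S) :
    ∃ k ∈ K, G.Adj v k := by
  obtain ⟨w, hw⟩ := exists_adj hconn hnt v
  have hwm : w ∈ K ∪ S := hpart ▸ Set.mem_univ w
  rcases hwm with h | h
  · exact ⟨w, h, hw⟩
  · exact absurd hw (hS v hv w h)

lemma reach_two (hpart : K ∪ S = Set.univ) (hK : G.IsClique K)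
    (hS : ∀ a ∈ S, ∀ b ∈ S, ¬ G.Adj a b) (hconn : G.Connected) (hnt : Nontrivial V)
    {k : V} (hk : k ∈ K) (v : V) : G.Reachable k v ∧ G.dist k v ≤ 2 := by
  by_cases hv : v = k
  · subst hv; exact ⟨.refl _, by rw [SimpleGraph.dist_self]; omega⟩
  · have hvm : v ∈ K ∪ S := hpart ▸ Set.mem_univ v
    rcases hvm with h | h
    · have hadj : G.Adj k v := hK hk h (Ne.symm hv)
      refine ⟨hadj.reachable, ?_⟩
      have := SimpleGraph.dist_le (SimpleGraph.Walk.cons hadj SimpleGraph.Walk.nil)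
      exact le_trans this (by simp)
    · obtain ⟨w, hwK, hwadj⟩ := neighbor_in_K hpart hS hconn hnt h
      by_cases hwk : w = k
      · subst hwk
        refine ⟨hwadj.symm.reachable, ?_⟩
        have := SimpleGraph.dist_le (SimpleGraph.Walk.cons hwadj.symm SimpleGraph.Walk.nil)
        exact le_trans this (by simp)
      · have hkw : G.Adj k w := hK hk hwK (Ne.symm hwk)
        refine ⟨(SimpleGraph.Walk.cons hkw (SimpleGraph.Walk.cons hwadj.symm SimpleGraph.Walk.nil)).reachable, ?_⟩
        have := SimpleGraph.dist_le (SimpleGraph.Walk.cons hkw (SimpleGraph.Walk.cons hwadj.symm SimpleGraph.Walk.nil))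
        exact le_trans this (by simp)

lemma dom_of_K (hpart : K ∪ S = Set.univ) (hK : G.IsClique K)
    (hS : ∀ a ∈ S, ∀ b ∈ S, ¬ G.Adj a b) (hconn : G.Connected) (hnt : Nontrivial V)
    {D : Finset V} {k : V} (hk : k ∈ K) (hkD : k ∈ D) : IsDrDS G 2 ↑D :=
  fun v => ⟨k, hkD, reach_two hpart hK hS hconn hnt hk v⟩

lemma adj_k0 (hpart : K ∪ S = Set.univ) (hS : ∀ a ∈ S, ∀ b ∈ S, ¬ G.Adj a b)
    (hconn : G.Connected) (hnt : Nontrivial V)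
    (hK1 : ∀ a ∈ K, ∀ b ∈ K, a = b) {k0 : V} (hk0 : k0 ∈ K) (z : V) :
    z = k0 ∨ G.Adj z k0 := by
  by_cases hz : z = k0
  · exact Or.inl hz
  · have hzm : z ∈ K ∪ S := hpart ▸ Set.mem_univ z
    rcases hzm with h | h
    · exact Or.inl (hK1 z h k0 hk0)
    · obtain ⟨k, hkK, hadj⟩ := neighbor_in_K hpart hS hconn hnt h
      exact Or.inr ((hK1 k hkK k0 hk0) ▸ hadj)

lemma reach_two_all (hpart : K ∪ S = Set.univ) (hS : ∀ a ∈ S, ∀ b ∈ S, ¬ G.Adj a b)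
    (hconn : G.Connected) (hnt : Nontrivial V)
    (hK1 : ∀ a ∈ K, ∀ b ∈ K, a = b) {k0 : V} (hk0 : k0 ∈ K) (u v : V) :
    G.Reachable u v ∧ G.dist u v ≤ 2 := by
  by_cases huv : u = v
  · subst huv; exact ⟨.refl _, by rw [SimpleGraph.dist_self]; omega⟩
  rcases adj_k0 hpart hS hconn hnt hK1 hk0 u with hu | hu
  · rcases adj_k0 hpart hS hconn hnt hK1 hk0 v with hv | hv
    · exact absurd (hu.trans hv.symm) huv
    · subst hu
      refine ⟨hv.symm.reachable, ?_⟩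
      have := SimpleGraph.dist_le (SimpleGraph.Walk.cons hv.symm SimpleGraph.Walk.nil)
      exact le_trans this (by simp)
  · rcases adj_k0 hpart hS hconn hnt hK1 hk0 v with hv | hv
    · subst hv
      refine ⟨hu.reachable, ?_⟩
      have := SimpleGraph.dist_le (SimpleGraph.Walk.cons hu SimpleGraph.Walk.nil)
      exact le_trans this (by simp)
    · refine ⟨(SimpleGraph.Walk.cons hu (SimpleGraph.Walk.cons hv.symm SimpleGraph.Walk.nil)).reachable, ?_⟩
      have := SimpleGraph.dist_le (SimpleGraph.Walk.cons hu (SimpleGraph.Walk.cons hv.symm SimpleGraph.Walk.nil))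
      exact le_trans this (by simp)

section Main
variable {V : Type*} [DecidableEq V] {G : SimpleGraph V} {K S : Set V}

lemma main_big (hpart : K ∪ S = Set.univ) (hdisj : Disjoint K S)
    (hK : G.IsClique K) (hS : ∀ a ∈ S, ∀ b ∈ S, ¬ G.Adj a b) (hconn : G.Connected)
    {a b : V} (haK : a ∈ K) (hbK : b ∈ K) (hab : a ≠ b) :
    ∀ n : ℕ, ∀ D D' : Finset V, (∃ k ∈ K, k ∈ D) → (∃ k ∈ K, k ∈ D') →
      D.card = D'.card → (D \ D').card = n →
      Relation.ReflTransGen (R G) D D' := by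
  intro n
  induction n using Nat.strong_induction_on with
  | _ n IH =>
  intro D D' hDk hD'k hcard hn
  by_cases hDD' : D = D'
  · exact hDD' ▸ .refl
  -- extract x ∈ D \ D' and y ∈ D' \ D
  have hsd : (D \ D').Nonempty := by
    rw [Finset.sdiff_nonempty]
    exact fun hsub => hDD' (Finset.eq_of_subset_of_card_le hsub hcard.ge)
  have hsd' : (D' \ D).Nonempty := by
    rw [Finset.sdiff_nonempty]
    exact fun hsub => hDD' (Finset.eq_of_subset_of_card_le hsub hcard.le).symm
  obtain ⟨x, hx⟩ := hsd
  have hxD : x ∈ D := (Finset.mem_sdiff.mp hx).1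
  have hxD' : x ∉ D' := (Finset.mem_sdiff.mp hx).2
  -- general helpers
  have memS : ∀ {z : V}, z ∉ K → z ∈ S := fun {z} hz =>
    (hpart ▸ Set.mem_univ z : z ∈ K ∪ S).resolve_left hz
  by_cases hA : ∃ y' ∈ D' \ D, y' ∈ K
  case pos =>
    obtain ⟨y, hy, hyK⟩ := hA
    have hyD' : y ∈ D' := (Finset.mem_sdiff.mp hy).1
    have hyD : y ∉ D := (Finset.mem_sdiff.mp hy).2
    have hxy : x ≠ y := fun h => hyD (h ▸ hxD)
    have hnt : Nontrivial V := ⟨x, y, hxy⟩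
    have domK : ∀ {E : Finset V} {k : V}, k ∈ K → k ∈ E → IsDrDS G 2 ↑E :=
      fun hk hkE => dom_of_K hpart hK hS hconn hnt hk hkE
    obtain ⟨kD, hkDK, hkDD⟩ := hDk
    have domD : IsDrDS G 2 ↑D := domK hkDK hkDD
    have finish : ∀ F : Finset V, Relation.ReflTransGen (R G) D F → F = mv D x y →
        (∃ k ∈ K, k ∈ F) → Relation.ReflTransGen (R G) D D' := by
      intro F hRTG hF hkF
      refine hRTG.trans (IH ((F \ D').card) ?_ F D' hkF hD'k ?_ rfl)
      · rw [hF, ← hn]; exact sdiff_mv_lt hx hy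
      · rw [hF, card_mv hxD hyD]; exact hcard
    by_cases hxK : x ∈ K
    · -- one move x → y
      have s1 : R G D (mv D x y) :=
        R.step G hxD hyD (hK hxK hyK hxy) domD (domK hyK (mem_mv.mpr (Or.inl rfl)))
      exact finish _ (.single s1) rfl ⟨y, hyK, mem_mv.mpr (Or.inl rfl)⟩
    · have hxS : x ∈ S := memS hxK
      obtain ⟨kx, hkxK, hxkx⟩ := neighbor_in_K hpart hS hconn hnt hxS
      have hxnekx : x ≠ kx := fun h => Set.disjoint_left.mp hdisj (h ▸ hkxK) hxS
      by_cases hkxy : kx = y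
      · have s1 : R G D (mv D x y) :=
          R.step G hxD hyD (hkxy ▸ hxkx) domD (domK hyK (mem_mv.mpr (Or.inl rfl)))
        exact finish _ (.single s1) rfl ⟨y, hyK, mem_mv.mpr (Or.inl rfl)⟩
      · by_cases hkxD : kx ∈ D
        · -- kx → y then x → kx
          have s1 : R G D (mv D kx y) :=
            R.step G hkxD hyD (hK hkxK hyK hkxy) domD
              (domK hyK (mem_mv.mpr (Or.inl rfl)))
          have s2 : R G (mv D kx y) (mv (mv D kx y) x kx) :=
            R.step G (mem_mv.mpr (Or.inr ⟨hxD, hxnekx⟩))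
              (fun h => by
                rcases mem_mv.mp h with h | ⟨_, h⟩
                exacts [hkxy h, h rfl])
              hxkx (domK hyK (mem_mv.mpr (Or.inl rfl)))
              (domK hyK (mem_mv.mpr (Or.inr ⟨mem_mv.mpr (Or.inl rfl), hxy.symm⟩)))
          have heq : mv (mv D kx y) x kx = mv D x y :=
            mv_mv_thread hxnekx hxy hkxD
          exact finish _ ((Relation.ReflTransGen.single s1).tail s2) heq
            ⟨y, hyK, heq ▸ mem_mv.mpr (Or.inl rfl)⟩
        · -- x → kx then kx → y
          have s1 : R G D (mv D x kx) :=
            R.step G hxD hkxD hxkx domD (domK hkxK (mem_mv.mpr (Or.inl rfl)))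
          have s2 : R G (mv D x kx) (mv (mv D x kx) kx y) :=
            R.step G (mem_mv.mpr (Or.inl rfl))
              (fun h => by
                rcases mem_mv.mp h with h | ⟨h, _⟩
                exacts [hkxy h.symm, hyD h])
              (hK hkxK hyK hkxy) (domK hkxK (mem_mv.mpr (Or.inl rfl)))
              (domK hyK (mem_mv.mpr (Or.inl rfl)))
          have heq : mv (mv D x kx) kx y = mv D x y := mv_mv_cancel hkxD
          exact finish _ ((Relation.ReflTransGen.single s1).tail s2) heq
            ⟨y, hyK, heq ▸ mem_mv.mpr (Or.inl rfl)⟩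
  case neg =>
    -- every element of D' \ D is in S; pick y and its K-neighbor ky
    obtain ⟨y, hy⟩ := hsd'
    have hyD' : y ∈ D' := (Finset.mem_sdiff.mp hy).1
    have hyD : y ∉ D := (Finset.mem_sdiff.mp hy).2
    have hyK : y ∉ K := fun h => hA ⟨y, hy, h⟩
    have hyS : y ∈ S := memS hyK
    have hxy : x ≠ y := fun h => hyD (h ▸ hxD)
    have hnt : Nontrivial V := ⟨x, y, hxy⟩
    have domK : ∀ {E : Finset V} {k : V}, k ∈ K → k ∈ E → IsDrDS G 2 ↑E :=
      fun hk hkE => dom_of_K hpart hK hS hconn hnt hk hkE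
    obtain ⟨kD, hkDK, hkDD⟩ := hDk
    have domD : IsDrDS G 2 ↑D := domK hkDK hkDD
    -- a K-token common to D and D'
    obtain ⟨ks, hksK, hksD'⟩ := hD'k
    have hksD : ks ∈ D := by
      by_contra h
      exact hA ⟨ks, Finset.mem_sdiff.mpr ⟨hksD', h⟩, hksK⟩
    have hksx : ks ≠ x := fun h => hxD' (h ▸ hksD')
    have hksy : ks ≠ y := fun h => Set.disjoint_left.mp hdisj hksK (h ▸ hyS)
    obtain ⟨ky, hkyK, hyky⟩ := neighbor_in_K hpart hS hconn hnt hyS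
    have hyneky : y ≠ ky := fun h => Set.disjoint_left.mp hdisj (h ▸ hkyK) hyS
    have finish : ∀ F : Finset V, Relation.ReflTransGen (R G) D F → F = mv D x y →
        (∃ k ∈ K, k ∈ F) → Relation.ReflTransGen (R G) D D' := by
      intro F hRTG hF hkF
      refine hRTG.trans (IH ((F \ D').card) ?_ F D' hkF ⟨ks, hksK, hksD'⟩ ?_ rfl)
      · rw [hF, ← hn]; exact sdiff_mv_lt hx hy
      · rw [hF, card_mv hxD hyD]; exact hcard
    by_cases hkyD : ky ∈ D
    · by_cases hkyD' : ky ∈ D'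
      · -- ky ∈ D ∩ D'
        have hxky : x ≠ ky := fun h => hxD' (h ▸ hkyD')
        -- adjacency from x to some K-vertex
        by_cases hxK : x ∈ K
        · -- 2-move: ky → y, x → ky ; x ∈ K keeps domination
          have s1 : R G D (mv D ky y) :=
            R.step G hkyD hyD hyky.symm domD
              (domK hxK (mem_mv.mpr (Or.inr ⟨hxD, hxky⟩)))
          have s2 : R G (mv D ky y) (mv (mv D ky y) x ky) :=
            R.step G (mem_mv.mpr (Or.inr ⟨hxD, hxky⟩))
              (fun h => by
                rcases mem_mv.mp h with h | ⟨_, h⟩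
                exacts [hyneky h.symm, h rfl])
              (hK hxK hkyK hxky)
              (domK hxK (mem_mv.mpr (Or.inr ⟨hxD, hxky⟩)))
              (domK hkyK (mem_mv.mpr (Or.inl rfl)))
          have heq : mv (mv D ky y) x ky = mv D x y := mv_mv_thread hxky hxy hkyD
          exact finish _ ((Relation.ReflTransGen.single s1).tail s2) heq
            ⟨ks, hksK, by rw [heq]; exact mem_mv.mpr (Or.inr ⟨hksD, hksx⟩)⟩
        · have hxS : x ∈ S := memS hxK
          obtain ⟨kx, hkxK, hxkx⟩ := neighbor_in_K hpart hS hconn hnt hxS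
          have hxnekx : x ≠ kx := fun h => Set.disjoint_left.mp hdisj (h ▸ hkxK) hxS
          have hkxy : kx ≠ y := fun h => Set.disjoint_left.mp hdisj hkxK (h ▸ hyS)
          by_cases hkxD : kx ∈ D
          · by_cases hkxky : kx = ky
            · -- x is adjacent to ky (= kx ∈ D)
              have hxadjky : G.Adj x ky := hkxky ▸ hxkx
              by_cases hspare : ∃ k', k' ∈ K ∧ k' ∈ D ∧ k' ≠ ky
              · obtain ⟨k', hk'K, hk'D, hk'ky⟩ := hspare
                have hk'y : k' ≠ y := fun h => Set.disjoint_left.mp hdisj hk'K (h ▸ hyS)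
                have s1 : R G D (mv D ky y) :=
                  R.step G hkyD hyD hyky.symm domD
                    (domK hk'K (mem_mv.mpr (Or.inr ⟨hk'D, hk'ky⟩)))
                have s2 : R G (mv D ky y) (mv (mv D ky y) x ky) :=
                  R.step G (mem_mv.mpr (Or.inr ⟨hxD, hxky⟩))
                    (fun h => by
                      rcases mem_mv.mp h with h | ⟨_, h⟩
                      exacts [hyneky h.symm, h rfl])
                    hxadjky
                    (domK hk'K (mem_mv.mpr (Or.inr ⟨hk'D, hk'ky⟩)))
                    (domK hkyK (mem_mv.mpr (Or.inl rfl)))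
                have heq : mv (mv D ky y) x ky = mv D x y := mv_mv_thread hxky hxy hkyD
                exact finish _ ((Relation.ReflTransGen.single s1).tail s2) heq
                  ⟨ks, hksK, by rw [heq]; exact mem_mv.mpr (Or.inr ⟨hksD, hksx⟩)⟩
              · -- D ∩ K = {ky}; use a spare clique vertex k1 ∉ D
                have hk1 : ∃ k1, k1 ∈ K ∧ k1 ≠ ky := by
                  by_cases h : a = ky
                  · exact ⟨b, hbK, fun hh => hab (h ▸ hh ▸ rfl)⟩
                  · exact ⟨a, haK, h⟩
                obtain ⟨k1, hk1K, hk1ky⟩ := hk1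
                have hk1D : k1 ∉ D := fun h => hspare ⟨k1, hk1K, h, hk1ky⟩
                have hk1y : k1 ≠ y := fun h => Set.disjoint_left.mp hdisj hk1K (h ▸ hyS)
                have hk1x : k1 ≠ x := fun h => Set.disjoint_left.mp hdisj hk1K (h ▸ hxS)
                -- 4-move: ky → k1, x → ky, ky → y, k1 → ky
                have hmem_k1_F1 : k1 ∈ mv D ky k1 := mem_mv.mpr (Or.inl rfl)
                have s1 : R G D (mv D ky k1) :=
                  R.step G hkyD hk1D (hK hkyK hk1K (Ne.symm hk1ky)) domD
                    (domK hk1K hmem_k1_F1)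
                have hxF1 : x ∈ mv D ky k1 := mem_mv.mpr (Or.inr ⟨hxD, hxky⟩)
                have hkyF1 : ky ∉ mv D ky k1 := fun h => by
                  rcases mem_mv.mp h with h | ⟨_, h⟩
                  exacts [hk1ky h.symm, h rfl]
                have hk1F2 : k1 ∈ mv (mv D ky k1) x ky :=
                  mem_mv.mpr (Or.inr ⟨hmem_k1_F1, hk1x⟩)
                have s2 : R G (mv D ky k1) (mv (mv D ky k1) x ky) :=
                  R.step G hxF1 hkyF1 hxadjky (domK hk1K hmem_k1_F1) (domK hk1K hk1F2)
                have hkyF2 : ky ∈ mv (mv D ky k1) x ky := mem_mv.mpr (Or.inl rfl)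
                have hyF2 : y ∉ mv (mv D ky k1) x ky := fun h => by
                  rcases mem_mv.mp h with h | ⟨h, _⟩
                  · exact hyneky h
                  · rcases mem_mv.mp h with h | ⟨h, _⟩
                    exacts [hk1y h.symm, hyD h]
                have hk1F3 : k1 ∈ mv (mv (mv D ky k1) x ky) ky y :=
                  mem_mv.mpr (Or.inr ⟨hk1F2, hk1ky⟩)
                have s3 : R G (mv (mv D ky k1) x ky) (mv (mv (mv D ky k1) x ky) ky y) :=
                  R.step G hkyF2 hyF2 hyky.symm (domK hk1K hk1F2) (domK hk1K hk1F3)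
                have hkyF3 : ky ∉ mv (mv (mv D ky k1) x ky) ky y := fun h => by
                  rcases mem_mv.mp h with h | ⟨_, h⟩
                  exacts [hyneky h.symm, h rfl]
                have s4 : R G (mv (mv (mv D ky k1) x ky) ky y)
                    (mv (mv (mv (mv D ky k1) x ky) ky y) k1 ky) :=
                  R.step G hk1F3 hkyF3 (hK hk1K hkyK hk1ky) (domK hk1K hk1F3)
                    (domK hkyK (mem_mv.mpr (Or.inl rfl)))
                have heq2 : mv (mv D ky k1) x ky = mv D x k1 :=
                  mv_mv_thread hxky (fun h => hk1x h.symm) hkyD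
                have hkyE : ky ∈ mv D x k1 := mem_mv.mpr (Or.inr ⟨hkyD, fun h => hxky h.symm⟩)
                have heq4 : mv (mv (mv (mv D ky k1) x ky) ky y) k1 ky = mv D x y := by
                  rw [heq2, mv_mv_thread hk1ky hk1y hkyE, mv_mv_cancel hk1D]
                have hkyF4 : ky ∈ mv (mv (mv (mv D ky k1) x ky) ky y) k1 ky :=
                  mem_mv.mpr (Or.inl rfl)
                exact finish _
                  ((((Relation.ReflTransGen.single s1).tail s2).tail s3).tail s4)
                  heq4 ⟨ky, hkyK, by
                    rw [heq4]; exact mem_mv.mpr (Or.inr ⟨hkyD, fun h => hxky h.symm⟩)⟩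
            · -- kx ∈ D, kx ≠ ky : 3-move ky → y, kx → ky, x → kx
              have hkxky' : G.Adj kx ky := hK hkxK hkyK hkxky
              have hkxF1 : kx ∈ mv D ky y := mem_mv.mpr (Or.inr ⟨hkxD, hkxky⟩)
              have s1 : R G D (mv D ky y) :=
                R.step G hkyD hyD hyky.symm domD (domK hkxK hkxF1)
              have hkyF1 : ky ∉ mv D ky y := fun h => by
                rcases mem_mv.mp h with h | ⟨_, h⟩
                exacts [hyneky h.symm, h rfl]
              have hkyF2 : ky ∈ mv (mv D ky y) kx ky := mem_mv.mpr (Or.inl rfl)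
              have s2 : R G (mv D ky y) (mv (mv D ky y) kx ky) :=
                R.step G hkxF1 hkyF1 hkxky' (domK hkxK hkxF1) (domK hkyK hkyF2)
              have hxF2 : x ∈ mv (mv D ky y) kx ky :=
                mem_mv.mpr (Or.inr ⟨mem_mv.mpr (Or.inr ⟨hxD, hxky⟩), hxnekx⟩)
              have hkxF2 : kx ∉ mv (mv D ky y) kx ky := fun h => by
                rcases mem_mv.mp h with h | ⟨_, h⟩
                exacts [hkxky h, h rfl]
              have hkyF3 : ky ∈ mv (mv (mv D ky y) kx ky) x kx :=
                mem_mv.mpr (Or.inr ⟨hkyF2, fun h => hxky h.symm⟩)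
              have s3 : R G (mv (mv D ky y) kx ky) (mv (mv (mv D ky y) kx ky) x kx) :=
                R.step G hxF2 hkxF2 hxkx (domK hkyK hkyF2) (domK hkyK hkyF3)
              have heq : mv (mv (mv D ky y) kx ky) x kx = mv D x y := by
                rw [mv_mv_thread hkxky hkxy hkyD, mv_mv_thread hxnekx hxy hkxD]
              exact finish _ (((Relation.ReflTransGen.single s1).tail s2).tail s3) heq
                ⟨ky, hkyK, by rw [heq]; exact mem_mv.mpr (Or.inr ⟨hkyD, fun h => hxky h.symm⟩)⟩
          · -- kx ∉ D (so kx ≠ ky): 3-move x → kx, ky → y, kx → ky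
            have hkxky : kx ≠ ky := fun h => hkxD (h ▸ hkyD)
            have hkxF1 : kx ∈ mv D x kx := mem_mv.mpr (Or.inl rfl)
            have s1 : R G D (mv D x kx) :=
              R.step G hxD hkxD hxkx domD (domK hkxK hkxF1)
            have hkyF1 : ky ∈ mv D x kx := mem_mv.mpr (Or.inr ⟨hkyD, hxky.symm⟩)
            have hyF1 : y ∉ mv D x kx := fun h => by
              rcases mem_mv.mp h with h | ⟨h, _⟩
              exacts [hkxy h.symm, hyD h]
            have hkxF2 : kx ∈ mv (mv D x kx) ky y :=
              mem_mv.mpr (Or.inr ⟨hkxF1, hkxky⟩)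
            have s2 : R G (mv D x kx) (mv (mv D x kx) ky y) :=
              R.step G hkyF1 hyF1 hyky.symm (domK hkxK hkxF1) (domK hkxK hkxF2)
            have hkyF2 : ky ∉ mv (mv D x kx) ky y := fun h => by
              rcases mem_mv.mp h with h | ⟨_, h⟩
              exacts [hyneky h.symm, h rfl]
            have hkyF3 : ky ∈ mv (mv (mv D x kx) ky y) kx ky := mem_mv.mpr (Or.inl rfl)
            have s3 : R G (mv (mv D x kx) ky y) (mv (mv (mv D x kx) ky y) kx ky) :=
              R.step G hkxF2 hkyF2 (hK hkxK hkyK hkxky) (domK hkxK hkxF2)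
                (domK hkyK hkyF3)
            have heq : mv (mv (mv D x kx) ky y) kx ky = mv D x y := by
              rw [mv_mv_thread hkxky hkxy hkyF1, mv_mv_cancel hkxD]
            exact finish _ (((Relation.ReflTransGen.single s1).tail s2).tail s3) heq
              ⟨ky, hkyK, by rw [heq]; exact mem_mv.mpr (Or.inr ⟨hkyD, fun h => hxky h.symm⟩)⟩
      · -- ky ∈ D \ D' : single move ky → y
        have hksky : ks ≠ ky := fun h => hkyD' (h ▸ hksD')
        have s1 : R G D (mv D ky y) :=
          R.step G hkyD hyD hyky.symm domD
            (domK hksK (mem_mv.mpr (Or.inr ⟨hksD, hksky⟩)))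
        refine (Relation.ReflTransGen.single s1).trans
          (IH (((mv D ky y) \ D').card) ?_ _ D'
            ⟨ks, hksK, mem_mv.mpr (Or.inr ⟨hksD, hksky⟩)⟩ ⟨ks, hksK, hksD'⟩ ?_ rfl)
        · rw [← hn]
          exact sdiff_mv_lt (Finset.mem_sdiff.mpr ⟨hkyD, hkyD'⟩) hy
        · rw [card_mv hkyD hyD]; exact hcard
    · -- ky ∉ D
      have hxky : x ≠ ky := fun h => hkyD (h ▸ hxD)
      -- get adjacency x–ky directly or via kx
      by_cases hxadj : G.Adj x ky
      · -- 2-move x → ky, ky → y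
        have hkyF1 : ky ∈ mv D x ky := mem_mv.mpr (Or.inl rfl)
        have s1 : R G D (mv D x ky) :=
          R.step G hxD hkyD hxadj domD (domK hkyK hkyF1)
        have hyF1 : y ∉ mv D x ky := fun h => by
          rcases mem_mv.mp h with h | ⟨h, _⟩
          exacts [hyneky h, hyD h]
        have hksF2 : ks ∈ mv (mv D x ky) ky y := by
          refine mem_mv.mpr (Or.inr ⟨mem_mv.mpr (Or.inr ⟨hksD, hksx⟩), ?_⟩)
          exact fun h => hkyD (h ▸ hksD)
        have s2 : R G (mv D x ky) (mv (mv D x ky) ky y) :=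
          R.step G hkyF1 hyF1 hyky.symm (domK hkyK hkyF1) (domK hksK hksF2)
        have heq : mv (mv D x ky) ky y = mv D x y := mv_mv_cancel hkyD
        exact finish _ ((Relation.ReflTransGen.single s1).tail s2) heq
          ⟨ks, hksK, by rw [heq]; exact mem_mv.mpr (Or.inr ⟨hksD, hksx⟩)⟩
      · -- x not adjacent to ky; x ∈ S with neighbour kx ≠ ky
        have hxK : x ∉ K := fun h => hxadj (hK h hkyK hxky)
        have hxS : x ∈ S := memS hxK
        obtain ⟨kx, hkxK, hxkx⟩ := neighbor_in_K hpart hS hconn hnt hxS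
        have hxnekx : x ≠ kx := fun h => Set.disjoint_left.mp hdisj (h ▸ hkxK) hxS
        have hkxky : kx ≠ ky := fun h => hxadj (h ▸ hxkx)
        have hkxy : kx ≠ y := fun h => Set.disjoint_left.mp hdisj hkxK (h ▸ hyS)
        by_cases hkxD : kx ∈ D
        · -- 3-move kx → ky, x → kx, ky → y
          have hkyF1 : ky ∈ mv D kx ky := mem_mv.mpr (Or.inl rfl)
          have s1 : R G D (mv D kx ky) :=
            R.step G hkxD hkyD (hK hkxK hkyK hkxky) domD (domK hkyK hkyF1)
          have hxF1 : x ∈ mv D kx ky := mem_mv.mpr (Or.inr ⟨hxD, hxnekx⟩)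
          have hkxF1 : kx ∉ mv D kx ky := fun h => by
            rcases mem_mv.mp h with h | ⟨_, h⟩
            exacts [hkxky h, h rfl]
          have hkyF2 : ky ∈ mv (mv D kx ky) x kx :=
            mem_mv.mpr (Or.inr ⟨hkyF1, fun h => hxky h.symm⟩)
          have s2 : R G (mv D kx ky) (mv (mv D kx ky) x kx) :=
            R.step G hxF1 hkxF1 hxkx (domK hkyK hkyF1) (domK hkyK hkyF2)
          have hyF2 : y ∉ mv (mv D kx ky) x kx := fun h => by
            rcases mem_mv.mp h with h | ⟨h, _⟩
            · exact hkxy h.symm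
            · rcases mem_mv.mp h with h' | ⟨h', _⟩
              exacts [hyneky h', hyD h']
          have hkxF3 : kx ∈ mv (mv (mv D kx ky) x kx) ky y :=
            mem_mv.mpr (Or.inr ⟨mem_mv.mpr (Or.inl rfl), hkxky⟩)
          have s3 : R G (mv (mv D kx ky) x kx) (mv (mv (mv D kx ky) x kx) ky y) :=
            R.step G hkyF2 hyF2 hyky.symm (domK hkyK hkyF2) (domK hkxK hkxF3)
          have heq : mv (mv (mv D kx ky) x kx) ky y = mv D x y := by
            rw [mv_mv_thread hxnekx hxky hkxD, mv_mv_cancel hkyD]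
          exact finish _ (((Relation.ReflTransGen.single s1).tail s2).tail s3) heq
            ⟨kx, hkxK, by rw [heq]; exact mem_mv.mpr (Or.inr ⟨hkxD, fun h => hxnekx h.symm⟩)⟩
        · -- 3-move x → kx, kx → ky, ky → y
          have hkxF1 : kx ∈ mv D x kx := mem_mv.mpr (Or.inl rfl)
          have s1 : R G D (mv D x kx) :=
            R.step G hxD hkxD hxkx domD (domK hkxK hkxF1)
          have hkyF1 : ky ∉ mv D x kx := fun h => by
            rcases mem_mv.mp h with h | ⟨h, _⟩
            exacts [hkxky h.symm, hkyD h]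
          have hkyF2 : ky ∈ mv (mv D x kx) kx ky := mem_mv.mpr (Or.inl rfl)
          have s2 : R G (mv D x kx) (mv (mv D x kx) kx ky) :=
            R.step G hkxF1 hkyF1 (hK hkxK hkyK hkxky) (domK hkxK hkxF1)
              (domK hkyK hkyF2)
          have heq2 : mv (mv D x kx) kx ky = mv D x ky := mv_mv_cancel hkxD
          have hyF2 : y ∉ mv (mv D x kx) kx ky := fun h => by
            rw [heq2] at h
            rcases mem_mv.mp h with h | ⟨h, _⟩
            exacts [hyneky h, hyD h]
          have hksF3 : ks ∈ mv (mv (mv D x kx) kx ky) ky y := by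
            rw [heq2]
            refine mem_mv.mpr (Or.inr ⟨mem_mv.mpr (Or.inr ⟨hksD, hksx⟩), ?_⟩)
            exact fun h => hkyD (h ▸ hksD)
          have s3 : R G (mv (mv D x kx) kx ky) (mv (mv (mv D x kx) kx ky) ky y) :=
            R.step G hkyF2 hyF2 hyky.symm (domK hkyK hkyF2) (domK hksK hksF3)
          have heq : mv (mv (mv D x kx) kx ky) ky y = mv D x y := by
            rw [heq2, mv_mv_cancel hkyD]
          exact finish _ (((Relation.ReflTransGen.single s1).tail s2).tail s3) heq
            ⟨ks, hksK, by rw [heq]; exact mem_mv.mpr (Or.inr ⟨hksD, hksx⟩)⟩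

lemma main_small (hpart : K ∪ S = Set.univ) (hdisj : Disjoint K S)
    (hS : ∀ a ∈ S, ∀ b ∈ S, ¬ G.Adj a b) (hconn : G.Connected)
    (hK1 : ∀ a ∈ K, ∀ b ∈ K, a = b) {k0 : V} (hk0K : k0 ∈ K) :
    ∀ n : ℕ, ∀ D D' : Finset V, D.Nonempty → D'.Nonempty →
      D.card = D'.card → (D \ D').card = n →
      Relation.ReflTransGen (R G) D D' := by
  intro n
  induction n using Nat.strong_induction_on with
  | _ n IH =>
  intro D D' hDne hD'ne hcard hn
  by_cases hDD' : D = D'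
  · exact hDD' ▸ .refl
  have hsd : (D \ D').Nonempty := by
    rw [Finset.sdiff_nonempty]
    exact fun hsub => hDD' (Finset.eq_of_subset_of_card_le hsub hcard.ge)
  have hsd' : (D' \ D).Nonempty := by
    rw [Finset.sdiff_nonempty]
    exact fun hsub => hDD' (Finset.eq_of_subset_of_card_le hsub hcard.le).symm
  obtain ⟨x, hx⟩ := hsd
  obtain ⟨y, hy⟩ := hsd'
  have hxD : x ∈ D := (Finset.mem_sdiff.mp hx).1
  have hxD' : x ∉ D' := (Finset.mem_sdiff.mp hx).2
  have hyD' : y ∈ D' := (Finset.mem_sdiff.mp hy).1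
  have hyD : y ∉ D := (Finset.mem_sdiff.mp hy).2
  have hxy : x ≠ y := fun h => hyD (h ▸ hxD)
  have hnt : Nontrivial V := ⟨x, y, hxy⟩
  have adj0 : ∀ z : V, z = k0 ∨ G.Adj z k0 :=
    adj_k0 hpart hS hconn hnt hK1 hk0K
  have domN : ∀ {E : Finset V}, E.Nonempty → IsDrDS G 2 ↑E := by
    rintro E ⟨u, hu⟩ v
    exact ⟨u, hu, reach_two_all hpart hS hconn hnt hK1 hk0K u v⟩
  have domD : IsDrDS G 2 ↑D := domN ⟨x, hxD⟩
  have finish : ∀ F : Finset V, Relation.ReflTransGen (R G) D F → F = mv D x y →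
      Relation.ReflTransGen (R G) D D' := by
    intro F hRTG hF
    refine hRTG.trans (IH ((F \ D').card) ?_ F D' ?_ hD'ne ?_ rfl)
    · rw [hF, ← hn]; exact sdiff_mv_lt hx hy
    · exact ⟨y, hF ▸ mem_mv.mpr (Or.inl rfl)⟩
    · rw [hF, card_mv hxD hyD]; exact hcard
  by_cases hy0 : y = k0
  · have hx0 : x ≠ k0 := fun h => hxy (h.trans hy0.symm)
    have hadj : G.Adj x y := hy0 ▸ (adj0 x).resolve_left hx0
    exact finish _ (.single (R.step G hxD hyD hadj domD
      (domN ⟨y, mem_mv.mpr (Or.inl rfl)⟩))) rfl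
  · have hadjy : G.Adj y k0 := (adj0 y).resolve_left hy0
    by_cases h0D : k0 ∈ D
    · by_cases hx0 : x = k0
      · have hadj : G.Adj x y := hx0 ▸ hadjy.symm
        exact finish _ (.single (R.step G hxD hyD hadj domD
          (domN ⟨y, mem_mv.mpr (Or.inl rfl)⟩))) rfl
      · -- k0 → y then x → k0
        have s1 : R G D (mv D k0 y) :=
          R.step G h0D hyD hadjy.symm domD (domN ⟨y, mem_mv.mpr (Or.inl rfl)⟩)
        have hxE1 : x ∈ mv D k0 y := mem_mv.mpr (Or.inr ⟨hxD, hx0⟩)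
        have h0E1 : k0 ∉ mv D k0 y := fun h => by
          rcases mem_mv.mp h with h | ⟨_, h⟩
          exacts [hy0 h.symm, h rfl]
        have s2 : R G (mv D k0 y) (mv (mv D k0 y) x k0) :=
          R.step G hxE1 h0E1 ((adj0 x).resolve_left hx0)
            (domN ⟨x, hxE1⟩) (domN ⟨k0, mem_mv.mpr (Or.inl rfl)⟩)
        exact finish _ ((Relation.ReflTransGen.single s1).tail s2)
          (mv_mv_thread hx0 hxy h0D)
    · -- x → k0 then k0 → y
      have hx0 : x ≠ k0 := fun h => h0D (h ▸ hxD)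
      have s1 : R G D (mv D x k0) :=
        R.step G hxD h0D ((adj0 x).resolve_left hx0) domD
          (domN ⟨k0, mem_mv.mpr (Or.inl rfl)⟩)
      have h0E1 : k0 ∈ mv D x k0 := mem_mv.mpr (Or.inl rfl)
      have hyE1 : y ∉ mv D x k0 := fun h => by
        rcases mem_mv.mp h with h | ⟨h, _⟩
        exacts [hy0 h, hyD h]
      have s2 : R G (mv D x k0) (mv (mv D x k0) k0 y) :=
        R.step G h0E1 hyE1 hadjy.symm (domN ⟨k0, h0E1⟩)
          (domN ⟨y, mem_mv.mpr (Or.inl rfl)⟩)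
      exact finish _ ((Relation.ReflTransGen.single s1).tail s2)
        (mv_mv_cancel h0D)

end Main

end TSAux

theorem stmt4 {V : Type*} [Fintype V] (G : SimpleGraph V) (K S : Set V)
    (hpart : K ∪ S = Set.univ) (hdisj : Disjoint K S)
    (hK : G.IsClique K) (hS : ∀ a ∈ S, ∀ b ∈ S, ¬ G.Adj a b)
    (hconn : G.Connected)
    (Ds Dt : Finset V) (hDs : IsDrDS G 2 ↑Ds) (hDt : IsDrDS G 2 ↑Dt)
    (hcard : Ds.card = Dt.card) :
    ∃ (q : ℕ) (Dseq : Fin (q + 1) → Finset V),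
      IsTSSeq G 2 q Dseq ∧ Dseq 0 = Ds ∧ Dseq (Fin.last q) = Dt := by
  classical
  by_cases hqe : Ds = Dt
  · obtain ⟨q, f, h1, h2, h3⟩ :=
      TSAux.RTG_toSeq G (Relation.ReflTransGen.refl (a := Ds)) hDs
    exact ⟨q, f, h1, h2, h3.trans hqe⟩
  · have hsd : (Ds \ Dt).Nonempty := by
      rw [Finset.sdiff_nonempty]
      exact fun hsub => hqe (Finset.eq_of_subset_of_card_le hsub hcard.ge)
    have hsd' : (Dt \ Ds).Nonempty := by
      rw [Finset.sdiff_nonempty]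
      exact fun hsub => hqe (Finset.eq_of_subset_of_card_le hsub hcard.le).symm
    obtain ⟨x, hx⟩ := hsd
    obtain ⟨y, hy⟩ := hsd'
    have hxDs : x ∈ Ds := (Finset.mem_sdiff.mp hx).1
    have hyDt : y ∈ Dt := (Finset.mem_sdiff.mp hy).1
    have hxy : x ≠ y := fun h => (Finset.mem_sdiff.mp hy).2 (h ▸ hxDs)
    have hnt : Nontrivial V := ⟨x, y, hxy⟩
    have memS : ∀ {z : V}, z ∉ K → z ∈ S := fun {z} hz =>
      (hpart ▸ Set.mem_univ z : z ∈ K ∪ S).resolve_left hz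
    -- K is nonempty
    have hKne : ∃ k, k ∈ K := by
      by_cases hxK : x ∈ K
      · exact ⟨x, hxK⟩
      · obtain ⟨k, hkK, _⟩ := TSAux.neighbor_in_K hpart hS hconn hnt (memS hxK)
        exact ⟨k, hkK⟩
    obtain ⟨k0, hk0K⟩ := hKne
    have hRTG : Relation.ReflTransGen (TSAux.R G) Ds Dt := by
      by_cases hK1 : ∀ a ∈ K, ∀ b ∈ K, a = b
      · exact TSAux.main_small hpart hdisj hS hconn hK1 hk0K _ Ds Dt
          ⟨x, hxDs⟩ ⟨y, hyDt⟩ hcard rfl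
      · push_neg at hK1
        obtain ⟨a, haK, b, hbK, hab⟩ := hK1
        have entry : ∀ E : Finset V, IsDrDS G 2 ↑E → E.Nonempty →
            ∃ E', Relation.ReflTransGen (TSAux.R G) E E' ∧
              (∃ k ∈ K, k ∈ E') ∧ E'.card = E.card := by
          intro E hdom ⟨u, hu⟩
          by_cases h : ∃ k ∈ K, k ∈ E
          · exact ⟨E, .refl, h, rfl⟩
          · have huS : u ∈ S := memS (fun hh => h ⟨u, hh, hu⟩)
            obtain ⟨k, hkK, huk⟩ := TSAux.neighbor_in_K hpart hS hconn hnt huS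
            have hkE : k ∉ E := fun hh => h ⟨k, hkK, hh⟩
            refine ⟨TSAux.mv E u k, .single (TSAux.R.step G hu hkE huk hdom
              (TSAux.dom_of_K hpart hK hS hconn hnt hkK
                (TSAux.mem_mv.mpr (Or.inl rfl)))), ?_, ?_⟩
            · exact ⟨k, hkK, TSAux.mem_mv.mpr (Or.inl rfl)⟩
            · exact TSAux.card_mv hu hkE
        obtain ⟨Ds', hRs, hks, hcs⟩ := entry Ds hDs ⟨x, hxDs⟩
        obtain ⟨Dt', hRt, hkt, hct⟩ := entry Dt hDt ⟨y, hyDt⟩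
        have hmid : Relation.ReflTransGen (TSAux.R G) Ds' Dt' :=
          TSAux.main_big hpart hdisj hK hS hconn haK hbK hab _ Ds' Dt' hks hkt
            (by rw [hcs, hct]; exact hcard) rfl
        exact (hRs.trans hmid).trans (TSAux.RTG_symm G hRt)
    obtain ⟨q, f, h1, h2, h3⟩ := TSAux.RTG_toSeq G hRTG hDs
    exact ⟨q, f, h1, h2, h3⟩
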